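/- arXiv:1509.05902 — 2 statements merged into one kernel-verified Lean document; each statement's English description precedes it below -/
import Mathlib

section
/- Let x, y ∈ ℝ^n be probability vectors with pairwise distinct strictly positive entries. If e_k(x) ≤ e_k(y) for all k = 1,…,n, then the subentropy satisfies Q(x) ≤ Q(y). -/
open Finset Real

noncomputable def esymm (n k : ℕ) (x : Fin n → ℝ) : ℝ :=
  ∑ s ∈ Finset.powersetCard k (Finset.univ : Finset (Fin n)), ∏ i ∈ s, x i

/-- Subentropy of a vector with pairwise distinct entries. -/
noncomputable def subentropy (n : ℕ) (x : Fin n → ℝ) : ℝ :=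
  -∑ i, (x i ^ n / ∏ j ∈ Finset.univ.erase i, (x i - x j)) * Real.log (x i)

open MeasureTheory Filter Polynomial in
/-- The basic improper integral. -/
lemma subent_integral_aux (a : ℝ) (ha : 0 < a) :
    MeasureTheory.IntegrableOn (fun t : ℝ => (t + a)⁻¹ - (t + 1)⁻¹) (Set.Ioi 0) ∧
      ∫ t in Set.Ioi (0:ℝ), ((t + a)⁻¹ - (t + 1)⁻¹) = - Real.log a := by
  set F : ℝ → ℝ := fun t => Real.log (t + a) - Real.log (t + 1) with hF
  have hderiv : ∀ t ∈ Set.Ici (0:ℝ), HasDerivAt F ((t + a)⁻¹ - (t + 1)⁻¹) t := by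
    intro t ht
    simp only [Set.mem_Ici] at ht
    have h1 : HasDerivAt (fun t : ℝ => Real.log (t + a)) ((t + a)⁻¹) t := by
      have := (((hasDerivAt_id t).add_const a).log (by positivity))
      simpa [one_div] using this
    have h2 : HasDerivAt (fun t : ℝ => Real.log (t + 1)) ((t + 1)⁻¹) t := by
      have := (((hasDerivAt_id t).add_const 1).log (by positivity))
      simpa [one_div] using this
    exact h1.sub h2
  have hlim : Tendsto F atTop (nhds 0) := by
    have h1 : Tendsto (fun t : ℝ => (t + a) / (t + 1)) atTop (nhds 1) := by
      have h0 : Tendsto (fun t : ℝ => 1 + (a - 1) / (t + 1)) atTop (nhds 1) := by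
        have := Tendsto.div_atTop (tendsto_const_nhds (x := a - 1))
          (tendsto_atTop_add_const_right atTop 1 tendsto_id)
        simpa using tendsto_const_nhds.add this
      apply h0.congr'
      filter_upwards [eventually_gt_atTop (0:ℝ)] with t ht
      have h1 : t + 1 ≠ 0 := by positivity
      field_simp
      ring
    have h2 := (Real.continuousAt_log one_ne_zero).tendsto.comp h1
    rw [Real.log_one] at h2
    apply h2.congr'
    filter_upwards [eventually_gt_atTop (0:ℝ)] with t ht
    simp only [Function.comp]
    rw [Real.log_div (by positivity) (by positivity)]
  have hF0 : F 0 = Real.log a := by simp [hF]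
  rcases le_total a 1 with hle | hle
  · have hpos : ∀ t ∈ Set.Ioi (0:ℝ), 0 ≤ (t + a)⁻¹ - (t + 1)⁻¹ := by
      intro t ht
      simp only [Set.mem_Ioi] at ht
      have : (t + 1)⁻¹ ≤ (t + a)⁻¹ := by
        apply inv_anti₀ (by positivity) (by linarith)
      linarith
    refine ⟨integrableOn_Ioi_deriv_of_nonneg' hderiv hpos hlim, ?_⟩
    rw [integral_Ioi_of_hasDerivAt_of_nonneg' hderiv hpos hlim, hF0]
    ring
  · have hneg : ∀ t ∈ Set.Ioi (0:ℝ), (t + a)⁻¹ - (t + 1)⁻¹ ≤ 0 := by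
      intro t ht
      simp only [Set.mem_Ioi] at ht
      have : (t + a)⁻¹ ≤ (t + 1)⁻¹ := by
        apply inv_anti₀ (by positivity) (by linarith)
      linarith
    refine ⟨integrableOn_Ioi_deriv_of_nonpos' hderiv hneg hlim, ?_⟩
    rw [integral_Ioi_of_hasDerivAt_of_nonpos' hderiv hneg hlim, hF0]
    ring

open Polynomial in
/-- The Lagrange-interpolation partial fraction identity, in polynomial form. -/
lemma subent_lagrange (m : ℕ) (x : Fin (m+1) → ℝ)
    (hxdist : ∀ i j, i ≠ j → x i ≠ x j) :
    ∑ i, Polynomial.C (x i ^ (m+1) / ∏ j ∈ Finset.univ.erase i, (x i - x j)) *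
        ∏ j ∈ Finset.univ.erase i, (X + Polynomial.C (x j))
      = (∏ j, (X + Polynomial.C (x j))) - X ^ (m+1) := by
  have hProdNe : ∀ i : Fin (m+1), (∏ j ∈ Finset.univ.erase i, (x i - x j)) ≠ 0 := by
    intro i
    apply Finset.prod_ne_zero_iff.2
    intro j hj
    have : j ≠ i := (Finset.mem_erase.1 hj).1
    exact sub_ne_zero_of_ne (hxdist i j (Ne.symm this))
  have hcard : ∀ i : Fin (m+1), (Finset.univ.erase i).card = m := by
    intro i
    rw [Finset.card_erase_of_mem (Finset.mem_univ i)]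
    simp
  have hcardu : ((Finset.univ : Finset (Fin (m+1))).card : WithBot ℕ) = ((m+1 : ℕ) : WithBot ℕ) := by
    rw [Finset.card_univ, Fintype.card_fin]
  apply Polynomial.eq_of_degrees_lt_of_eval_index_eq (v := fun i : Fin (m+1) => - x i)
      Finset.univ
  · -- injectivity of nodes
    intro i _ j _ hij
    by_contra h
    exact hxdist i j h (by simpa using neg_injective hij)
  · -- degree of LHS
    apply lt_of_le_of_lt (Polynomial.degree_sum_le _ _)
    rw [hcardu]
    apply Finset.sup_lt_iff (by exact_mod_cast WithBot.bot_lt_coe _) |>.2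
    intro i _
    apply lt_of_le_of_lt (Polynomial.degree_mul_le _ _)
    have h1 : (∏ j ∈ Finset.univ.erase i, (X + Polynomial.C (x j))).degree
        = ((m : ℕ) : WithBot ℕ) := by
      rw [Polynomial.degree_prod]
      rw [Finset.sum_congr rfl (fun j _ => Polynomial.degree_X_add_C (x j))]
      simp [hcard i]
    rw [h1]
    apply lt_of_le_of_lt (add_le_add_left Polynomial.degree_C_le _)
    rw [zero_add]
    exact_mod_cast Nat.lt_succ_self m
  · -- degree of RHS
    have hmonic : (∏ j, (X + Polynomial.C (x j)) : ℝ[X]).Monic :=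
      monic_prod_of_monic _ _ (fun j _ => monic_X_add_C (x j))
    have hnd : (∏ j, (X + Polynomial.C (x j)) : ℝ[X]).natDegree = m + 1 := by
      rw [Polynomial.natDegree_prod _ _ (fun j _ => (monic_X_add_C (x j)).ne_zero)]
      simp [Polynomial.natDegree_X_add_C]
    have hdeg : (∏ j, (X + Polynomial.C (x j)) : ℝ[X]).degree = ((m+1 : ℕ) : WithBot ℕ) := by
      rw [Polynomial.degree_eq_natDegree hmonic.ne_zero, hnd]
    have h := Polynomial.degree_sub_lt
      (p := (∏ j, (X + Polynomial.C (x j)) : ℝ[X])) (q := X ^ (m+1))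
      (by rw [hdeg, Polynomial.degree_X_pow]) hmonic.ne_zero
      (by rw [hmonic.leadingCoeff, Polynomial.leadingCoeff_X_pow])
    rw [hdeg] at h
    rw [hcardu]
    exact h
  · -- evaluation at the nodes
    intro i _
    rw [Polynomial.eval_finset_sum, Polynomial.eval_sub, Polynomial.eval_pow,
      Polynomial.eval_X, Polynomial.eval_prod]
    have hR : ∏ j, Polynomial.eval (-x i) (X + Polynomial.C (x j)) = 0 := by
      apply Finset.prod_eq_zero (Finset.mem_univ i)
      simp
    rw [hR, Finset.sum_eq_single i]
    · rw [Polynomial.eval_mul, Polynomial.eval_C, Polynomial.eval_prod]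
      have h1 : ∏ j ∈ Finset.univ.erase i, Polynomial.eval (-x i) (X + Polynomial.C (x j))
          = (-1) ^ m * ∏ j ∈ Finset.univ.erase i, (x i - x j) := by
        calc ∏ j ∈ Finset.univ.erase i, Polynomial.eval (-x i) (X + Polynomial.C (x j))
            = ∏ j ∈ Finset.univ.erase i, ((-1) * (x i - x j)) := by
              apply Finset.prod_congr rfl
              intro j _
              simp; ring
          _ = (-1) ^ (Finset.univ.erase i).card * ∏ j ∈ Finset.univ.erase i, (x i - x j) := by
              rw [Finset.prod_mul_distrib, Finset.prod_const]
          _ = (-1) ^ m * ∏ j ∈ Finset.univ.erase i, (x i - x j) := by rw [hcard i]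
      rw [h1, zero_sub, neg_pow]
      simp only [pow_succ]
      field_simp [hProdNe i]
      ring
    · intro b _ hbi
      rw [Polynomial.eval_mul, Polynomial.eval_prod]
      have : ∏ j ∈ Finset.univ.erase b, Polynomial.eval (-x i) (X + Polynomial.C (x j)) = 0 := by
        apply Finset.prod_eq_zero (Finset.mem_erase.2 ⟨hbi.symm, Finset.mem_univ i⟩)
        simp
      rw [this, mul_zero]
    · intro h
      exact absurd (Finset.mem_univ i) h

lemma subent_esymm_zero (n : ℕ) (x : Fin n → ℝ) : esymm n 0 x = 1 := by
  simp [esymm]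

lemma subent_esymm_one (n : ℕ) (x : Fin n → ℝ) : esymm n 1 x = ∑ i, x i := by
  unfold esymm
  rw [Finset.powersetCard_one, Finset.sum_map]
  simp

open Polynomial in
/-- Vieta: the product `∏ (t + x i)` expanded in elementary symmetric polynomials. -/
lemma subent_prod_eq (n : ℕ) (x : Fin n → ℝ) (t : ℝ) :
    ∏ i, (t + x i) = ∑ k ∈ Finset.range (n+1), esymm n k x * t ^ (n - k) := by
  have hmonic : (∏ j, (X + Polynomial.C (x j)) : ℝ[X]).Monic :=
    monic_prod_of_monic _ _ (fun j _ => monic_X_add_C (x j))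
  have hnd : (∏ j, (X + Polynomial.C (x j)) : ℝ[X]).natDegree = n := by
    rw [Polynomial.natDegree_prod _ _ (fun j _ => (monic_X_add_C (x j)).ne_zero)]
    simp [Polynomial.natDegree_X_add_C]
  have hcoeff : ∀ k ≤ n, (∏ j, (X + Polynomial.C (x j)) : ℝ[X]).coeff k = esymm n (n - k) x := by
    intro k hk
    rw [Finset.prod_X_add_C_coeff Finset.univ x (by simpa using hk)]
    unfold esymm
    rw [Finset.card_univ, Fintype.card_fin]
  have heval : ∏ i, (t + x i)
      = Polynomial.eval t (∏ j, (X + Polynomial.C (x j)) : ℝ[X]) := by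
    rw [Polynomial.eval_prod]
    apply Finset.prod_congr rfl
    intro j _
    simp
  rw [heval, Polynomial.eval_eq_sum_range, hnd]
  rw [← Finset.sum_range_reflect]
  apply Finset.sum_congr rfl
  intro k hk
  rw [Finset.mem_range] at hk
  have e2 : n + 1 - 1 - k = n - k := by omega
  rw [e2, hcoeff (n - k) (by omega)]
  have e1 : n - (n - k) = k := by omega
  rw [e1]

open MeasureTheory Filter Polynomial in
/-- The integral representation of subentropy. -/
lemma subentropy_eq_integral (n : ℕ) (hn : 0 < n) (x : Fin n → ℝ)
    (hx : ∀ i, 0 < x i) (hxdist : ∀ i j, i ≠ j → x i ≠ x j) (hx1 : ∑ i, x i = 1) :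
    MeasureTheory.IntegrableOn
        (fun t : ℝ => t / (1 + t) - t ^ n / ∏ i, (t + x i)) (Set.Ioi 0) ∧
      subentropy n x
        = ∫ t in Set.Ioi (0:ℝ), (t / (1 + t) - t ^ n / ∏ i, (t + x i)) := by
  obtain ⟨m, rfl⟩ := Nat.exists_eq_succ_of_ne_zero hn.ne'
  set c : Fin (m+1) → ℝ :=
    fun i => x i ^ (m+1) / ∏ j ∈ Finset.univ.erase i, (x i - x j) with hc
  have hlag := subent_lagrange m x hxdist
  have hProdNe : ∀ i : Fin (m+1), (∏ j ∈ Finset.univ.erase i, (x i - x j)) ≠ 0 := by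
    intro i
    apply Finset.prod_ne_zero_iff.2
    intro j hj
    have : j ≠ i := (Finset.mem_erase.1 hj).1
    exact sub_ne_zero_of_ne (hxdist i j (Ne.symm this))
  -- sum of coefficients is 1
  have hcsum : ∑ i, c i = 1 := by
    simp only [hc]
    have h := congrArg (fun p : ℝ[X] => p.coeff m) hlag
    simp only [Polynomial.finset_sum_coeff, Polynomial.coeff_sub] at h
    have h1 : ∀ b : Fin (m+1),
        (Polynomial.C (x b ^ (m+1) / ∏ j ∈ Finset.univ.erase b, (x b - x j)) *
            ∏ j ∈ Finset.univ.erase b, (X + Polynomial.C (x j))).coeff m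
          = x b ^ (m+1) / ∏ j ∈ Finset.univ.erase b, (x b - x j) := by
      intro b
      rw [Polynomial.coeff_C_mul]
      have hmon : (∏ j ∈ Finset.univ.erase b, (X + Polynomial.C (x j)) : ℝ[X]).Monic :=
        monic_prod_of_monic _ _ (fun j _ => monic_X_add_C (x j))
      have hnd : (∏ j ∈ Finset.univ.erase b, (X + Polynomial.C (x j)) : ℝ[X]).natDegree = m := by
        rw [Polynomial.natDegree_prod _ _ (fun j _ => (monic_X_add_C (x j)).ne_zero)]
        simp [Polynomial.natDegree_X_add_C, Finset.card_erase_of_mem]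
      have h3 : (∏ j ∈ Finset.univ.erase b, (X + Polynomial.C (x j)) : ℝ[X]).coeff m = 1 := by
        have h5 := hmon.coeff_natDegree
        rw [hnd] at h5
        exact h5
      rw [h3, mul_one]
    rw [Finset.sum_congr rfl (fun b _ => h1 b)] at h
    have h2 : (∏ j, (X + Polynomial.C (x j)) : ℝ[X]).coeff m = 1 := by
      rw [Finset.prod_X_add_C_coeff Finset.univ x (by simp)]
      have hcard1 : (Finset.univ : Finset (Fin (m+1))).card - m = 1 := by simp
      rw [hcard1]
      have h4 := subent_esymm_one (m+1) x
      unfold esymm at h4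
      rw [h4]
      exact hx1
    have h3 : ((X : ℝ[X]) ^ (m+1)).coeff m = 0 := by
      rw [Polynomial.coeff_X_pow]
      simp
    rw [h2, h3] at h
    simpa using h
  -- pointwise identity on [0, ∞)
  have hPpos : ∀ t : ℝ, 0 ≤ t → 0 < ∏ i, (t + x i) := by
    intro t ht
    apply Finset.prod_pos
    intro i _
    have := hx i
    linarith
  have hkey : ∀ t : ℝ, 0 ≤ t →
      t / (1 + t) - t ^ (m+1) / ∏ i, (t + x i)
        = ∑ i, c i * ((t + x i)⁻¹ - (t + 1)⁻¹) := by
    intro t ht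
    have hP := hPpos t ht
    have ht1 : (0:ℝ) < 1 + t := by linarith
    have heval : ∑ i, c i * ∏ j ∈ Finset.univ.erase i, (t + x j)
        = (∏ j, (t + x j)) - t ^ (m+1) := by
      have h0 := congrArg (fun p : ℝ[X] => Polynomial.eval t p) hlag
      simpa only [Polynomial.eval_finset_sum, Polynomial.eval_sub, Polynomial.eval_pow,
        Polynomial.eval_mul, Polynomial.eval_C, Polynomial.eval_prod, Polynomial.eval_add,
        Polynomial.eval_X, hc] using h0
    have hterm : ∀ i : Fin (m+1),
        c i * (t + x i)⁻¹ = c i * (∏ j ∈ Finset.univ.erase i, (t + x j)) / ∏ j, (t + x j) := by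
      intro i
      rw [eq_div_iff hP.ne']
      rw [← Finset.mul_prod_erase Finset.univ (fun j => t + x j) (Finset.mem_univ i)]
      have hti : t + x i ≠ 0 := by have := hx i; positivity
      field_simp
    have hsum1 : ∑ i, c i * (t + x i)⁻¹ = 1 - t ^ (m+1) / ∏ j, (t + x j) := by
      rw [Finset.sum_congr rfl (fun i _ => hterm i), ← Finset.sum_div, heval]
      rw [sub_div, div_self hP.ne']
    calc t / (1 + t) - t ^ (m+1) / ∏ i, (t + x i)
        = (1 - t ^ (m+1) / ∏ i, (t + x i)) - (t + 1)⁻¹ := by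
          have : t / (1 + t) = 1 - (t + 1)⁻¹ := by
            rw [eq_sub_iff_add_eq, inv_eq_one_div, div_add_div _ _ ht1.ne' (by linarith : t + 1 ≠ 0)]
            rw [div_eq_one_iff_eq (by positivity)]
            ring
          rw [this]; ring
      _ = ∑ i, c i * (t + x i)⁻¹ - (∑ i, c i) * (t + 1)⁻¹ := by
          rw [hsum1, hcsum, one_mul]
      _ = ∑ i, c i * ((t + x i)⁻¹ - (t + 1)⁻¹) := by
          rw [Finset.sum_mul, ← Finset.sum_sub_distrib]
          apply Finset.sum_congr rfl
          intro i _
          ring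
  -- integrability and integral of the sum
  have hint : ∀ i : Fin (m+1),
      MeasureTheory.IntegrableOn (fun t : ℝ => (t + x i)⁻¹ - (t + 1)⁻¹) (Set.Ioi 0) ∧
        ∫ t in Set.Ioi (0:ℝ), ((t + x i)⁻¹ - (t + 1)⁻¹) = - Real.log (x i) :=
    fun i => subent_integral_aux (x i) (hx i)
  have hintsum : MeasureTheory.IntegrableOn
      (fun t : ℝ => ∑ i, c i * ((t + x i)⁻¹ - (t + 1)⁻¹)) (Set.Ioi 0) := by
    apply MeasureTheory.integrable_finset_sum
    intro i _
    exact ((hint i).1.const_mul (c i))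
  have hG : MeasureTheory.IntegrableOn
      (fun t : ℝ => t / (1 + t) - t ^ (m+1) / ∏ i, (t + x i)) (Set.Ioi 0) := by
    apply hintsum.congr_fun _ measurableSet_Ioi
    intro t ht
    exact (hkey t (le_of_lt ht)).symm
  refine ⟨hG, ?_⟩
  have h1 : ∫ t in Set.Ioi (0:ℝ), (t / (1 + t) - t ^ (m+1) / ∏ i, (t + x i))
      = ∫ t in Set.Ioi (0:ℝ), ∑ i, c i * ((t + x i)⁻¹ - (t + 1)⁻¹) := by
    apply MeasureTheory.setIntegral_congr_fun measurableSet_Ioi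
    intro t ht
    exact hkey t (le_of_lt ht)
  rw [h1]
  rw [MeasureTheory.integral_finset_sum _ (fun i _ => ((hint i).1.const_mul (c i)))]
  have h2 : ∀ i : Fin (m+1),
      ∫ t in Set.Ioi (0:ℝ), c i * ((t + x i)⁻¹ - (t + 1)⁻¹) = c i * (- Real.log (x i)) := by
    intro i
    rw [MeasureTheory.integral_const_mul, (hint i).2]
  rw [Finset.sum_congr rfl (fun i _ => h2 i)]
  unfold subentropy
  have hfin : ∀ i : Fin (m+1), c i * (- Real.log (x i))
      = -((x i ^ (m+1) / ∏ j ∈ Finset.univ.erase i, (x i - x j)) * Real.log (x i)) := by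
    intro i
    simp only [hc]
    ring
  rw [Finset.sum_congr rfl fun i _ => hfin i, Finset.sum_neg_distrib]

theorem stmt_18 (n : ℕ) (x y : Fin n → ℝ)
    (hx : ∀ i, 0 < x i) (hy : ∀ i, 0 < y i)
    (hxdist : ∀ i j, i ≠ j → x i ≠ x j)
    (hydist : ∀ i j, i ≠ j → y i ≠ y j)
    (hx1 : ∑ i, x i = 1) (hy1 : ∑ i, y i = 1)
    (hE : ∀ k, 1 ≤ k → k ≤ n → esymm n k x ≤ esymm n k y) :
    subentropy n x ≤ subentropy n y := by
  rcases Nat.eq_zero_or_pos n with rfl | hn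
  · simp at hx1
  obtain ⟨hGx, hQx⟩ := subentropy_eq_integral n hn x hx hxdist hx1
  obtain ⟨hGy, hQy⟩ := subentropy_eq_integral n hn y hy hydist hy1
  rw [hQx, hQy]
  apply MeasureTheory.setIntegral_mono_on hGx hGy measurableSet_Ioi
  intro t ht
  simp only [Set.mem_Ioi] at ht
  have hprodle : ∏ i, (t + x i) ≤ ∏ i, (t + y i) := by
    rw [subent_prod_eq n x t, subent_prod_eq n y t]
    apply Finset.sum_le_sum
    intro k hk
    rcases Nat.eq_zero_or_pos k with rfl | hk1
    · rw [subent_esymm_zero, subent_esymm_zero]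
    · apply mul_le_mul_of_nonneg_right (hE k hk1 (by
        rw [Finset.mem_range] at hk; omega)) (by positivity)
  have hPx : (0:ℝ) < ∏ i, (t + x i) := by
    apply Finset.prod_pos; intro i _; have := hx i; linarith
  apply sub_le_sub_left
  exact div_le_div_of_nonneg_left (by positivity) hPx hprodle
end

section
/- Let h: ℝ_+ → ℝ be monotonically increasing, μ a nonnegative measure on [0,∞), and define ψ(x) = ∫_0^∞ h(∏_{i=1}^n (t + x_i)) dμ(t) on strictly positive vectors x ∈ ℝ^n (assuming the integral is finite). If e_k(x) ≤ e_k(y) for all k = 1,…,n, then ψ(x) ≤ ψ(y). -/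
open Finset Real MeasureTheory

lemma prod_add_expand (n : ℕ) (x : Fin n → ℝ) (t : ℝ) :
    (∏ i, (t + x i)) = ∑ k ∈ range (n + 1), esymm n k x * t ^ (n - k) := by
  have := Finset.prod_add x (fun _ => t) (Finset.univ : Finset (Fin n))
  simp only [add_comm t] at *
  rw [this, Finset.sum_powerset]
  simp only [Finset.card_univ, Fintype.card_fin]
  refine Finset.sum_congr rfl fun k hk => ?_
  rw [esymm, Finset.sum_mul]
  refine Finset.sum_congr rfl fun s hs => ?_
  rw [Finset.prod_const]
  congr 1
  rw [Finset.mem_powersetCard] at hs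
  rw [Finset.card_sdiff_of_subset hs.1, Finset.card_univ, Fintype.card_fin, hs.2]

lemma prod_le (n : ℕ) (x y : Fin n → ℝ) (hx : ∀ i, 0 < x i)
    (hE : ∀ k, 1 ≤ k → k ≤ n → esymm n k x ≤ esymm n k y) (t : ℝ) (ht : 0 ≤ t) :
    (∏ i, (t + x i)) ≤ ∏ i, (t + y i) := by
  rw [prod_add_expand, prod_add_expand]
  refine Finset.sum_le_sum fun k hk => ?_
  rcases Nat.eq_zero_or_pos k with rfl | hk1
  · have : esymm n 0 x = esymm n 0 y := by simp [esymm]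
    rw [this]
  · exact mul_le_mul_of_nonneg_right
      (hE k hk1 (by simpa using Nat.lt_succ_iff.mp (Finset.mem_range.mp hk)))
      (pow_nonneg ht _)

theorem stmt_19 (n : ℕ) (h : ℝ → ℝ) (hmono : MonotoneOn h (Set.Ici (0 : ℝ)))
    (μ : Measure ℝ)
    (ψ : (Fin n → ℝ) → ℝ)
    (hψ : ∀ x : Fin n → ℝ, (∀ i, 0 < x i) →
      ψ x = ∫ t in Set.Ici (0 : ℝ), h (∏ i, (t + x i)) ∂μ)
    (x y : Fin n → ℝ) (hx : ∀ i, 0 < x i) (hy : ∀ i, 0 < y i)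
    (hintx : IntegrableOn (fun t => h (∏ i, (t + x i))) (Set.Ici (0 : ℝ)) μ)
    (hinty : IntegrableOn (fun t => h (∏ i, (t + y i))) (Set.Ici (0 : ℝ)) μ)
    (hE : ∀ k, 1 ≤ k → k ≤ n → esymm n k x ≤ esymm n k y) :
    ψ x ≤ ψ y := by
  rw [hψ x hx, hψ y hy]
  refine setIntegral_mono_on hintx hinty measurableSet_Ici fun t ht => ?_
  have ht' : (0 : ℝ) ≤ t := ht
  have hxn : (0 : ℝ) ≤ ∏ i, (t + x i) :=
    Finset.prod_nonneg fun i _ => add_nonneg ht' (hx i).le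
  have hyn : (0 : ℝ) ≤ ∏ i, (t + y i) :=
    Finset.prod_nonneg fun i _ => add_nonneg ht' (hy i).le
  exact hmono hxn hyn (prod_le n x y hx hE t ht')
end
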